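/- Let p be an odd prime. The polynomial f in F_p[x_1, ..., x_{p+1}] defined by f(x_1, ..., x_{p+1}) = (x_1 + x_2 + ... + x_p)^{p-1} · (x_1 + 2x_2 + 3x_3 + ... + p·x_p + x_{p+1})^{p-1} contains no monomial with nonzero coefficient in which all of the variables x_1, ..., x_{p+1} appear with positive exponent. Equivalently, for every monomial x_1^{c_1}···x_{p+1}^{c_{p+1}} whose coefficient in f is nonzero, there exists some index K with c_K = 0. -/

import Mathlib

section UniPoly
open Finset Polynomial


lemma prod_X_sub_C_univ (p : ℕ) [Fact p.Prime] :
    ∏ a : ZMod p, (X - C a) = X ^ p - X := by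
  have hp2 : 1 < p := (Fact.out : p.Prime).one_lt
  have hmonic : (X ^ p - X : (ZMod p)[X]).Monic := by
    have : (X : (ZMod p)[X]).degree < ↑p := by
      rw [degree_X]; exact_mod_cast hp2
    simpa using monic_X_pow_sub this
  have hr := FiniteField.roots_X_pow_card_sub_X (ZMod p)
  rw [ZMod.card] at hr
  have hcard : Multiset.card (X ^ p - X : (ZMod p)[X]).roots = (X ^ p - X : (ZMod p)[X]).natDegree := by
    rw [hr, FiniteField.X_pow_card_sub_X_natDegree_eq _ hp2]
    simp [ZMod.card]
  have h := prod_multiset_X_sub_C_of_monic_of_roots_card_eq hmonic hcard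
  rw [hr] at h
  rw [← h, Finset.prod_eq_multiset_prod]

lemma prod_X_sub_C_erase (p : ℕ) [Fact p.Prime] :
    ∏ a ∈ (univ : Finset (ZMod p)).erase 0, (X - C a) = X ^ (p - 1) - 1 := by
  have hp2 : 1 < p := (Fact.out : p.Prime).one_lt
  have hsplit := Finset.mul_prod_erase univ (fun a : ZMod p => (X : (ZMod p)[X]) - C a)
    (mem_univ (0 : ZMod p))
  simp only [C_0, sub_zero] at hsplit
  have key : (X : (ZMod p)[X]) * ∏ a ∈ (univ : Finset (ZMod p)).erase 0, (X - C a)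
      = X * (X ^ (p - 1) - 1) := by
    rw [hsplit, prod_X_sub_C_univ p, mul_sub, mul_one, ← pow_succ', Nat.sub_add_cancel hp2.le]
  exact mul_left_cancel₀ X_ne_zero key

lemma prod_units_erase (p : ℕ) [Fact p.Prime] :
    ∏ a ∈ (univ : Finset (ZMod p)).erase 0, a = -1 := by
  have h1 := FiniteField.prod_univ_units_id_eq_neg_one (K := ZMod p)
  have h : ∏ a ∈ (univ : Finset (ZMod p)).erase 0, a
      = ((∏ x : (ZMod p)ˣ, x : (ZMod p)ˣ) : ZMod p) := by
    rw [← Units.coeHom_apply, map_prod]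
    refine (Finset.prod_bij' (fun a ha => Units.mk0 a (Finset.mem_erase.mp ha).1)
      (fun x _ => (x : ZMod p)) ?_ ?_ ?_ ?_ ?_) <;> simp
  rw [h, h1, Units.val_neg, Units.val_one]

lemma prod_one_add_CX (p : ℕ) [Fact p.Prime] :
    ∏ a ∈ (univ : Finset (ZMod p)).erase 0, (1 + C a * X) = 1 - X ^ (p - 1) := by
  have hfact : ∀ a ∈ (univ : Finset (ZMod p)).erase 0,
      (1 + C a * X) = C a * (X - C (-a⁻¹)) := by
    intro a ha
    have ha0 : a ≠ 0 := (Finset.mem_erase.mp ha).1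
    rw [map_neg, sub_neg_eq_add, mul_add, ← C_mul, mul_inv_cancel₀ ha0, C_1]
    ring
  rw [Finset.prod_congr rfl hfact, Finset.prod_mul_distrib]
  have hre : ∏ a ∈ (univ : Finset (ZMod p)).erase 0, ((X : (ZMod p)[X]) - C (-a⁻¹))
      = ∏ a ∈ (univ : Finset (ZMod p)).erase 0, (X - C a) := by
    refine Finset.prod_nbij' (fun a => -a⁻¹) (fun a => -a⁻¹) ?_ ?_ ?_ ?_ ?_ <;>
      intro a ha <;>
      simp_all [Finset.mem_erase, neg_eq_zero, inv_eq_zero, inv_neg]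
  rw [hre, prod_X_sub_C_erase, ← map_prod, prod_units_erase]
  simp only [map_neg, map_one]
  ring


lemma coeff_one_add_CX_pow {R : Type*} [CommSemiring R] (c : R) (m k : ℕ) :
    ((1 + C c * X : R[X]) ^ m).coeff k = (m.choose k : R) * c ^ k := by
  rw [add_comm, add_pow]
  simp only [one_pow, mul_one]
  rw [finset_sum_coeff]
  have hterm : ∀ j ∈ Finset.range (m + 1),
      ((C c * X) ^ j * (m.choose j : R[X])).coeff k
        = if j = k then (m.choose k : R) * c ^ k else 0 := by
    intro j _
    rw [mul_pow, ← C_pow, ← C_eq_natCast, mul_comm, ← mul_assoc, ← C_mul, coeff_C_mul,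
      coeff_X_pow]
    split_ifs with h h2 h3
    · subst h2; ring
    · exact absurd h.symm h2
    · exact absurd h3.symm h
    · ring
  rw [Finset.sum_congr rfl hterm, Finset.sum_ite_eq' (Finset.range (m + 1))]
  split_ifs with h
  · rfl
  · rw [Finset.mem_range, not_lt] at h
    rw [Nat.choose_eq_zero_of_lt (by omega), Nat.cast_zero, zero_mul]



lemma coeff_prod_one_add_CX_pow {ι R : Type*} [CommSemiring R] [DecidableEq ι]
    (s : Finset ι) (c : ι → R) (m : ι → ℕ) (v : ℕ) :
    (∏ i ∈ s, (1 + C (c i) * X : R[X]) ^ m i).coeff v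
      = ∑ b ∈ Finset.piAntidiag s v, ∏ i ∈ s, (((m i).choose (b i) : R) * c i ^ b i) := by
  induction s using Finset.cons_induction generalizing v with
  | empty =>
    rw [Finset.prod_empty, Finset.piAntidiag_empty]
    split_ifs with h
    · subst h; simp
    · simp [coeff_one, h]
  | cons a s ha ih =>
    rw [Finset.prod_cons, Polynomial.coeff_mul, Finset.piAntidiag_cons, Finset.sum_disjiUnion]
    refine Finset.sum_congr rfl ?_
    rintro ⟨x, y⟩ hxy
    rw [coeff_one_add_CX_pow, ih, Finset.sum_map, Finset.mul_sum]
    refine Finset.sum_congr rfl fun b hb => ?_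
    rw [Finset.mem_piAntidiag] at hb
    have hba : b a = 0 := by
      by_contra h
      exact ha (hb.2 a h)
    simp only [addRightEmbedding_apply]
    have h1 : (b + fun t => if t = a then x else 0) a = x := by simp [hba]
    have h2 : ∀ i ∈ s, (b + fun t => if t = a then x else 0) i = b i := by
      intro i hi
      have : i ≠ a := fun h => ha (h ▸ hi)
      simp [this]
    rw [Finset.prod_cons] at *
    rw [h1]
    congr 1
    exact (Finset.prod_congr rfl fun i hi => by rw [h2 i hi]).symm



lemma reduced_vanishing (p : ℕ) [Fact p.Prime] {σ : Type*} [DecidableEq σ]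
    (core : Finset σ) (c : σ → ZMod p)
    (hprod : ∏ i ∈ core, (1 + C (c i) * X : (ZMod p)[X]) = 1 - X ^ (p - 1))
    (hcard : core.card = p - 1)
    (d : σ → ℕ) (hd : ∀ i ∈ core, 1 ≤ d i)
    (u v : ℕ) (huv : u + v = ∑ i ∈ core, d i) (hu : u ≤ p - 2) (hv : v ≤ p - 2) :
    ∑ b ∈ Finset.piAntidiag core v,
      ∏ i ∈ core, (((d i).choose (b i) : ZMod p) * c i ^ b i) = 0 := by
  have hp2 : 1 < p := (Fact.out : p.Prime).one_lt
  rw [← coeff_prod_one_add_CX_pow]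
  set Q : (ZMod p)[X] := ∏ i ∈ core, (1 + C (c i) * X) ^ (d i - 1) with hQ
  have hfac : ∏ i ∈ core, (1 + C (c i) * X : (ZMod p)[X]) ^ d i = (1 - X ^ (p - 1)) * Q := by
    rw [← hprod, hQ, ← Finset.prod_mul_distrib]
    refine Finset.prod_congr rfl fun i hi => ?_
    rw [← pow_succ']
    congr 1
    have := hd i hi
    omega
  have hsum1 : ∑ i ∈ core, d i = (∑ i ∈ core, (d i - 1)) + core.card := by
    have : ∑ i ∈ core, d i = ∑ i ∈ core, ((d i - 1) + 1) :=
      Finset.sum_congr rfl fun i hi => by have := hd i hi; omega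
    rw [this, Finset.sum_add_distrib, Finset.sum_const, smul_eq_mul, mul_one]
  have hdegQ : Q.natDegree ≤ ∑ i ∈ core, (d i - 1) := by
    refine le_trans (Polynomial.natDegree_prod_le _ _) (Finset.sum_le_sum fun i hi => ?_)
    refine le_trans (Polynomial.natDegree_pow_le) ?_
    have h1 : (1 + C (c i) * X : (ZMod p)[X]).natDegree ≤ 1 := by
      refine le_trans (Polynomial.natDegree_add_le _ _) ?_
      simp only [natDegree_one, max_le_iff]
      refine ⟨Nat.zero_le _, le_trans (Polynomial.natDegree_mul_le) ?_⟩
      simp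
    calc (d i - 1) * (1 + C (c i) * X : (ZMod p)[X]).natDegree ≤ (d i - 1) * 1 :=
          Nat.mul_le_mul_left _ h1
      _ = d i - 1 := mul_one _
  have hvQ : Q.natDegree < v := by
    have h1 : ∑ i ∈ core, 1 ≤ ∑ i ∈ core, d i := Finset.sum_le_sum hd
    rw [Finset.sum_const, smul_eq_mul, mul_one] at h1
    omega
  rw [hfac, sub_mul, one_mul, Polynomial.coeff_sub,
    Polynomial.coeff_eq_zero_of_natDegree_lt hvQ, mul_comm, Polynomial.coeff_mul_X_pow']
  rw [if_neg (by omega)]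
  ring

end UniPoly

section MvPoly
open Finset MvPolynomial


lemma coeff_linear_pow {R σ : Type*} [CommSemiring R] [DecidableEq σ] [DecidableEq (σ → ℕ)]
    (s : Finset σ) (c : σ → R) (n : ℕ) (d : σ →₀ ℕ) :
    MvPolynomial.coeff d ((∑ i ∈ s, C (c i) * X i) ^ n) =
    if ⇑d ∈ Finset.piAntidiag s n then (Nat.multinomial s ⇑d : R) * ∏ i ∈ s, c i ^ d i
    else 0 := by
  rw [Finset.sum_pow_eq_sum_piAntidiag, MvPolynomial.coeff_sum]
  have hterm : ∀ k ∈ Finset.piAntidiag s n,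
      MvPolynomial.coeff d ((Nat.multinomial s k : MvPolynomial σ R) *
        ∏ i ∈ s, (C (c i) * X i) ^ k i)
      = if k = ⇑d then (Nat.multinomial s k : R) * ∏ i ∈ s, c i ^ k i else 0 := by
    intro k hk
    rw [Finset.mem_piAntidiag] at hk
    set kf : σ →₀ ℕ := Finsupp.onFinset s k (fun a ha => hk.2 a ha) with hkf
    have hco : ⇑kf = k := rfl
    have hprod : ∏ i ∈ s, ((C (c i) * X i) ^ k i : MvPolynomial σ R)
        = C (∏ i ∈ s, c i ^ k i) * monomial kf 1 := by
      have h1 : ∀ i ∈ s, ((C (c i) * X i) ^ k i : MvPolynomial σ R)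
          = C (c i ^ k i) * X i ^ k i := by
        intro i _
        rw [mul_pow, C_pow]
      rw [Finset.prod_congr rfl h1, Finset.prod_mul_distrib, ← map_prod]
      congr 1
      rw [← MvPolynomial.prod_X_pow_eq_monomial]
      refine (Finset.prod_subset (fun a ha => ?_) (fun x _ hx => ?_)).symm
      · exact hk.2 a (Finsupp.mem_support_iff.mp ha)
      · have : k x = 0 := by
          have := Finsupp.notMem_support_iff.mp hx
          rwa [← hco]
        rw [this, pow_zero]
    rw [hprod, ← mul_assoc, ← map_natCast (C : R →+* MvPolynomial σ R), ← map_mul,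
      MvPolynomial.coeff_C_mul, MvPolynomial.coeff_monomial]
    have : kf = d ↔ k = ⇑d := by
      constructor
      · intro h; rw [← hco, h]
      · intro h; ext a; exact congrFun h a
    split_ifs with h1 h2 h2
    · rw [mul_one]
    · exact absurd (this.mp h1) h2
    · exact absurd (this.mpr h2) h1
    · rw [mul_zero]
  rw [Finset.sum_congr rfl hterm, Finset.sum_ite_eq' (Finset.piAntidiag s n)]

end MvPoly
set_option maxHeartbeats 1000000 in
open Finset MvPolynomial in
/-- **Lemma 5.** For an odd prime `p`, the polynomial
`f = (x₁ + ⋯ + x_p)^{p-1} · (x₁ + 2x₂ + ⋯ + p·x_p + x_{p+1})^{p-1}` in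
`F_p[x₁, …, x_{p+1}]` contains no monomial (with nonzero coefficient) in which all of
the `p+1` variables appear with positive exponent.  Variables are indexed by
`Fin (p+1)`; the coefficient of `x_i` in the second factor is `i` for `1 ≤ i ≤ p`
and `1` for `x_{p+1}`, i.e. it is `i mod p` throughout (note `p + 1 ≡ 1 [MOD p]`). -/
theorem no_full_support_monomial (p : ℕ) (hp : p.Prime) (hodd : Odd p)
    (f : MvPolynomial (Fin (p + 1)) (ZMod p))
    (hf : f =
      (∑ i ∈ Finset.univ.filter (fun i : Fin (p + 1) => (i : ℕ) < p), X i) ^ (p - 1) *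
      (∑ i : Fin (p + 1), C (((i : ℕ) + 1 : ℕ) : ZMod p) * X i) ^ (p - 1)) :
    ∀ d : Fin (p + 1) →₀ ℕ, MvPolynomial.coeff d f ≠ 0 → ∃ K, d K = 0 := by
  classical
  haveI : Fact p.Prime := ⟨hp⟩
  have hp3 : 3 ≤ p := by
    have h2 := hp.two_le
    rcases Nat.lt_or_ge p 3 with h | h
    · interval_cases p
      · exact absurd hodd (by decide)
    · exact h
  intro d hcoeff
  by_contra hKex
  push_neg at hKex
  refine hcoeff ?_
  have hd1 : ∀ K, 1 ≤ d K := fun K => Nat.one_le_iff_ne_zero.mpr (hKex K)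
  -- index bookkeeping
  set pen : Fin (p + 1) := ⟨p - 1, by omega⟩ with hpen
  set lst : Fin (p + 1) := ⟨p, by omega⟩ with hlst
  set core : Finset (Fin (p + 1)) := Finset.univ.filter (fun i => (i : ℕ) < p - 1) with hcore
  have hpen_core : pen ∉ core := by simp [hcore, hpen]
  have hlst_core : lst ∉ core := by simp [hcore, hlst]
  have hpenlst : pen ≠ lst := by simp [hpen, hlst, Fin.ext_iff]; omega
  have hcases : ∀ j : Fin (p + 1), j = pen ∨ j = lst ∨ j ∈ core := by
    intro j
    have := j.isLt
    simp [hcore, hpen, hlst, Fin.ext_iff]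
    omega
  set s₁ : Finset (Fin (p + 1)) :=
    Finset.univ.filter (fun i : Fin (p + 1) => (i : ℕ) < p) with hs₁def
  have hs₁ : s₁ = insert pen core := by
    ext i
    simp [hs₁def, hcore, hpen, Fin.ext_iff]
    omega
  set c : Fin (p + 1) → ZMod p := fun i => (((i : ℕ) + 1 : ℕ) : ZMod p) with hc
  set s₂ : Finset (Fin (p + 1)) := insert lst core with hs₂def
  -- rewrite the two factors
  have hF1 : (∑ i ∈ s₁, (X i : MvPolynomial (Fin (p + 1)) (ZMod p)))
      = ∑ i ∈ s₁, C ((fun _ : Fin (p + 1) => (1 : ZMod p)) i) * X i := by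
    exact Finset.sum_congr rfl fun i _ => by rw [map_one, one_mul]
  have hF2 : (∑ i : Fin (p + 1), C (((i : ℕ) + 1 : ℕ) : ZMod p) * X i)
      = ∑ i ∈ s₂, C (c i) * X i := by
    have huniv2 : (Finset.univ : Finset (Fin (p + 1))) = insert pen s₂ := by
      ext i
      rcases hcases i with h | h | h <;> simp [hs₂def, h]
    have hpen_s₂ : pen ∉ s₂ := by
      simp [hs₂def, hpenlst, hpen_core]
    rw [huniv2, Finset.sum_insert hpen_s₂]
    have hCpen : C ((((pen : Fin (p+1)) : ℕ) + 1 : ℕ) : ZMod p)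
        = (0 : MvPolynomial (Fin (p + 1)) (ZMod p)) := by
      have : (((pen : Fin (p+1)) : ℕ) + 1 : ℕ) = p := by simp [hpen]; omega
      rw [this, ZMod.natCast_self, map_zero]
    rw [hCpen, zero_mul, zero_add]
  rw [hf, hF2, hF1, MvPolynomial.coeff_mul]
  -- coefficient formulas
  have hA : ∀ e : Fin (p + 1) →₀ ℕ,
      MvPolynomial.coeff e ((∑ i ∈ s₁, C ((fun _ : Fin (p + 1) => (1 : ZMod p)) i) * X i) ^ (p - 1))
        = if ⇑e ∈ Finset.piAntidiag s₁ (p - 1) then (Nat.multinomial s₁ ⇑e : ZMod p) else 0 := by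
    intro e
    rw [coeff_linear_pow]
    simp only [one_pow, Finset.prod_const_one, mul_one]
  have hB : ∀ e : Fin (p + 1) →₀ ℕ,
      MvPolynomial.coeff e ((∑ i ∈ s₂, C (c i) * X i) ^ (p - 1))
        = if ⇑e ∈ Finset.piAntidiag s₂ (p - 1) then
            (Nat.multinomial s₂ ⇑e : ZMod p) * ∏ i ∈ s₂, c i ^ e i else 0 :=
    fun e => coeff_linear_pow s₂ c (p - 1) e
  -- sums over univ from piAntidiag membership
  have hsum_univ : ∀ (e : Fin (p + 1) →₀ ℕ) (S : Finset (Fin (p + 1))),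
      ⇑e ∈ Finset.piAntidiag S (p - 1) → ∑ K, e K = p - 1 := by
    intro e S he
    rw [Finset.mem_piAntidiag] at he
    rw [← he.1]
    refine (Finset.sum_subset (Finset.subset_univ S) fun j _ hj => ?_).symm
    by_contra h
    exact hj (he.2 j h)
  by_cases hS2 : ∑ K, d K = 2 * (p - 1)
  swap
  · -- degree mismatch: every term vanishes
    refine Finset.sum_eq_zero fun x hx => ?_
    rw [Finset.HasAntidiagonal.mem_antidiagonal] at hx
    by_contra hne
    have h1 : MvPolynomial.coeff x.1 ((∑ i ∈ s₁, C ((fun _ : Fin (p+1) => (1 : ZMod p)) i) * X i) ^ (p - 1)) ≠ 0 :=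
      fun h => hne (by rw [h, zero_mul])
    have h2 : MvPolynomial.coeff x.2 ((∑ i ∈ s₂, C (c i) * X i) ^ (p - 1)) ≠ 0 :=
      fun h => hne (by rw [h, mul_zero])
    rw [hA] at h1
    rw [hB] at h2
    have hm1 : ⇑x.1 ∈ Finset.piAntidiag s₁ (p - 1) := by
      by_contra h; rw [if_neg h] at h1; exact h1 rfl
    have hm2 : ⇑x.2 ∈ Finset.piAntidiag s₂ (p - 1) := by
      by_contra h; rw [if_neg h] at h2; exact h2 rfl
    have e1 := hsum_univ _ _ hm1
    have e2 := hsum_univ _ _ hm2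
    have : ∑ K, d K = (∑ K, x.1 K) + (∑ K, x.2 K) := by
      rw [← Finset.sum_add_distrib]
      refine Finset.sum_congr rfl fun K _ => ?_
      rw [← hx]
      rfl
    omega
  · -- main case
    obtain ⟨s, hs⟩ : ∃ s, d pen = s := ⟨_, rfl⟩
    obtain ⟨t, ht⟩ : ∃ t, d lst = t := ⟨_, rfl⟩
    obtain ⟨u, hu⟩ : ∃ u, p - 1 - s = u := ⟨_, rfl⟩
    obtain ⟨v, hv⟩ : ∃ v, p - 1 - t = v := ⟨_, rfl⟩
    have hS2' : ∑ x ∈ Finset.univ, d x = 2 * (p - 1) := hS2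
    have hdK : ∀ K : Fin (p + 1), d K ≤ p - 2 := by
      intro K
      have h1 : d K + ∑ x ∈ Finset.univ.erase K, d x = ∑ x ∈ Finset.univ, d x :=
        Finset.add_sum_erase _ _ (Finset.mem_univ K)
      have h2 : (Finset.univ.erase K).card • 1 ≤ ∑ x ∈ Finset.univ.erase K, d x :=
        Finset.card_nsmul_le_sum _ _ _ fun i _ => hd1 i
      have h3 : (Finset.univ.erase K).card = p := by
        rw [Finset.card_erase_of_mem (Finset.mem_univ K), Finset.card_univ, Fintype.card_fin]
        omega
      rw [h3, smul_eq_mul, mul_one] at h2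
      omega
    have hsle : s ≤ p - 2 := hs ▸ hdK pen
    have htle : t ≤ p - 2 := ht ▸ hdK lst
    have hs1 : 1 ≤ s := hs ▸ hd1 pen
    have ht1 : 1 ≤ t := ht ▸ hd1 lst
    have hpen_ins : pen ∉ insert lst core := by simp [hpenlst, hpen_core]
    have huniv3 : (Finset.univ : Finset (Fin (p + 1))) = insert pen (insert lst core) := by
      ext i
      rcases hcases i with h | h | h <;> simp [h]
    have hcoresum : ∑ i ∈ core, d i = u + v := by
      have h := hS2'
      rw [huniv3, Finset.sum_insert hpen_ins, Finset.sum_insert hlst_core] at h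
      omega
    have hcard_core : core.card = p - 1 := by
      have hic : core = Finset.Iio pen := by
        ext i
        simp [hcore, Finset.mem_Iio, Fin.lt_def, hpen]
      rw [hic, Fin.card_Iio]
    have hinj : Set.InjOn c ↑core := by
      intro i hi j hj hij
      rw [Finset.mem_coe, hcore, Finset.mem_filter] at hi hj
      have hiv : (i : ℕ) + 1 < p := by omega
      have hjv : (j : ℕ) + 1 < p := by omega
      have h1 : ((((i : ℕ) + 1 : ℕ)) : ZMod p).val = (i : ℕ) + 1 := ZMod.val_cast_of_lt hiv
      have h2 : ((((j : ℕ) + 1 : ℕ)) : ZMod p).val = (j : ℕ) + 1 := ZMod.val_cast_of_lt hjv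
      have : (i : ℕ) = (j : ℕ) := by
        have := congrArg ZMod.val hij
        rw [hc] at this
        simp only at this
        rw [h1, h2] at this
        omega
      exact Fin.ext this
    have hprod : ∏ i ∈ core, (1 + Polynomial.C (c i) * Polynomial.X) =
        1 - (Polynomial.X : Polynomial (ZMod p)) ^ (p - 1) := by
      have himg : core.image c = (Finset.univ : Finset (ZMod p)).erase 0 := by
        apply Finset.eq_of_subset_of_card_le
        · intro a ha
          obtain ⟨i, hi, rfl⟩ := Finset.mem_image.mp ha
          refine Finset.mem_erase.mpr ⟨?_, Finset.mem_univ _⟩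
          intro h0
          rw [hc] at h0
          simp only at h0
          rw [ZMod.natCast_eq_zero_iff] at h0
          have h4 := Nat.le_of_dvd (by omega) h0
          rw [hcore, Finset.mem_filter] at hi
          omega
        · rw [Finset.card_erase_of_mem (Finset.mem_univ 0), Finset.card_univ, ZMod.card,
            Finset.card_image_of_injOn hinj, hcard_core]
      have hpi := Finset.prod_image
        (f := fun a : ZMod p => 1 + Polynomial.C a * Polynomial.X) (g := c) (s := core)
        (fun x hx y hy h => hinj hx hy h)
      rw [himg] at hpi
      rw [← hpi]
      exact prod_one_add_CX p
    obtain ⟨Unat, hUnat⟩ : ∃ U, ∏ i ∈ core, (d i).factorial = U := ⟨_, rfl⟩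
    have hUnz : (Unat : ZMod p) ≠ 0 := by
      rw [← hUnat, Nat.cast_prod]
      refine Finset.prod_ne_zero_iff.mpr fun i hi => ?_
      rw [Ne, ZMod.natCast_eq_zero_iff]
      intro hdvd
      have h5 := (Nat.Prime.dvd_factorial hp).mp hdvd
      have h6 := hdK i
      omega
    suffices h0 : (Unat : ZMod p) * ∑ x ∈ Finset.HasAntidiagonal.antidiagonal d,
        (MvPolynomial.coeff x.1 ((∑ i ∈ s₁, C ((fun _ : Fin (p + 1) => (1 : ZMod p)) i) * X i) ^ (p - 1)) *
         MvPolynomial.coeff x.2 ((∑ i ∈ s₂, C (c i) * X i) ^ (p - 1))) = 0 by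
      exact (mul_eq_zero.mp h0).resolve_left hUnz
    -- structural facts for terms with memberships
    have hstruct : ∀ a b : Fin (p + 1) →₀ ℕ, a + b = d →
        ⇑a ∈ Finset.piAntidiag s₁ (p - 1) → ⇑b ∈ Finset.piAntidiag s₂ (p - 1) →
        (∀ j, a j + b j = d j) ∧ b pen = 0 ∧ a lst = 0 ∧ a pen = s ∧ b lst = t ∧
        (∀ i ∈ core, b i ≤ d i) ∧ ∑ i ∈ core, a i = u ∧ ∑ i ∈ core, b i = v := by
      intro a b hab ha hb
      rw [Finset.mem_piAntidiag] at ha hb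
      have habj : ∀ j, a j + b j = d j := by
        intro j
        rw [← hab, Finsupp.add_apply]
      have hbpen : b pen = 0 := by
        by_contra h
        have h2 := hb.2 pen h
        rw [hs₂def, Finset.mem_insert] at h2
        rcases h2 with h2 | h2
        · exact hpenlst h2
        · exact hpen_core h2
      have halst : a lst = 0 := by
        by_contra h
        have h2 := ha.2 lst h
        rw [hs₁, Finset.mem_insert] at h2
        rcases h2 with h2 | h2
        · exact hpenlst h2.symm
        · exact hlst_core h2
      have hapen : a pen = s := by have := habj pen; omega
      have hblst : b lst = t := by have := habj lst; omega
      have hsa : ∑ i ∈ core, a i = u := by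
        have h1 := ha.1
        rw [hs₁, Finset.sum_insert hpen_core] at h1
        omega
      have hsb : ∑ i ∈ core, b i = v := by
        have h1 := hb.1
        rw [hs₂def, Finset.sum_insert hlst_core] at h1
        omega
      exact ⟨habj, hbpen, halst, hapen, hblst,
        fun i hi => by have := habj i; omega, hsa, hsb⟩
    -- key value computation
    have key : ∀ a b : Fin (p + 1) →₀ ℕ, a + b = d →
        ⇑a ∈ Finset.piAntidiag s₁ (p - 1) → ⇑b ∈ Finset.piAntidiag s₂ (p - 1) →
        (Unat : ZMod p) * ((Nat.multinomial s₁ ⇑a : ZMod p) *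
          ((Nat.multinomial s₂ ⇑b : ZMod p) * ∏ i ∈ s₂, c i ^ b i))
        = (((p - 1).choose s * (p - 1).choose t * u.factorial * v.factorial : ℕ) : ZMod p) *
            ∏ i ∈ core, (((d i).choose (b i) : ZMod p) * c i ^ b i) := by
      intro a b hab ha hb
      obtain ⟨habj, hbpen, halst, hapen, hblst, hble, hsa, hsb⟩ := hstruct a b hab ha hb
      have hma : Nat.multinomial s₁ ⇑a = (p - 1).choose s * Nat.multinomial core ⇑a := by
        rw [hs₁, Nat.multinomial_insert hpen_core, hapen, hsa,
          show s + u = p - 1 by omega]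
      have hmb : Nat.multinomial s₂ ⇑b = (p - 1).choose t * Nat.multinomial core ⇑b := by
        rw [hs₂def, Nat.multinomial_insert hlst_core, hblst, hsb,
          show t + v = p - 1 by omega]
      have hpb : ∏ i ∈ s₂, c i ^ b i = ∏ i ∈ core, c i ^ b i := by
        rw [hs₂def, Finset.prod_insert hlst_core, hblst]
        have hclst : c lst = 1 := by
          rw [hc]
          simp only
          rw [show ((lst : Fin (p+1)) : ℕ) + 1 = p + 1 by rw [hlst]]
          push_cast
          rw [ZMod.natCast_self, zero_add]
        rw [hclst, one_pow, one_mul]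
      have hUeq : Unat = (∏ i ∈ core, (d i).choose (b i)) * (∏ i ∈ core, (b i).factorial) *
          (∏ i ∈ core, (a i).factorial) := by
        rw [← hUnat, ← Finset.prod_mul_distrib, ← Finset.prod_mul_distrib]
        refine Finset.prod_congr rfl fun i hi => ?_
        have h1 := hble i hi
        have h2 : d i - b i = a i := by have := habj i; omega
        rw [← Nat.choose_mul_factorial_mul_factorial h1, h2]
      have hfa : (∏ i ∈ core, (a i).factorial) * Nat.multinomial core ⇑a = u.factorial := by
        rw [Nat.multinomial_spec, hsa]
      have hfb : (∏ i ∈ core, (b i).factorial) * Nat.multinomial core ⇑b = v.factorial := by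
        rw [Nat.multinomial_spec, hsb]
      have hnat : Unat * ((p - 1).choose s * Nat.multinomial core ⇑a) *
          ((p - 1).choose t * Nat.multinomial core ⇑b)
          = (p - 1).choose s * (p - 1).choose t * u.factorial * v.factorial *
            ∏ i ∈ core, (d i).choose (b i) := by
        rw [hUeq, ← hfa, ← hfb]
        ring
      calc (Unat : ZMod p) * ((Nat.multinomial s₁ ⇑a : ZMod p) *
            ((Nat.multinomial s₂ ⇑b : ZMod p) * ∏ i ∈ s₂, c i ^ b i))
          = ((Unat * ((p - 1).choose s * Nat.multinomial core ⇑a) *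
              ((p - 1).choose t * Nat.multinomial core ⇑b) : ℕ) : ZMod p) *
              ∏ i ∈ core, c i ^ b i := by
            rw [hma, hmb, hpb]
            push_cast
            ring
        _ = (((p - 1).choose s * (p - 1).choose t * u.factorial * v.factorial : ℕ) : ZMod p) *
              ∏ i ∈ core, (((d i).choose (b i) : ZMod p) * c i ^ b i) := by
            rw [hnat, Finset.prod_mul_distrib]
            push_cast
            ring
    -- membership extraction from nonzero terms
    have hmemx : ∀ x : (Fin (p + 1) →₀ ℕ) × (Fin (p + 1) →₀ ℕ),
        (Unat : ZMod p) *
          (MvPolynomial.coeff x.1 ((∑ i ∈ s₁, C ((fun _ : Fin (p + 1) => (1 : ZMod p)) i) * X i) ^ (p - 1)) *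
           MvPolynomial.coeff x.2 ((∑ i ∈ s₂, C (c i) * X i) ^ (p - 1))) ≠ 0 →
        ⇑x.1 ∈ Finset.piAntidiag s₁ (p - 1) ∧ ⇑x.2 ∈ Finset.piAntidiag s₂ (p - 1) := by
      intro x hne
      constructor
      · by_contra h
        rw [hA, if_neg h] at hne
        simp at hne
      · by_contra h
        rw [hB, if_neg h] at hne
        simp at hne
    rw [Finset.mul_sum]
    have hbij : ∑ x ∈ Finset.HasAntidiagonal.antidiagonal d, (Unat : ZMod p) *
          (MvPolynomial.coeff x.1 ((∑ i ∈ s₁, C ((fun _ : Fin (p + 1) => (1 : ZMod p)) i) * X i) ^ (p - 1)) *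
           MvPolynomial.coeff x.2 ((∑ i ∈ s₂, C (c i) * X i) ^ (p - 1)))
        = ∑ bh ∈ Finset.piAntidiag core v,
            (((p - 1).choose s * (p - 1).choose t * u.factorial * v.factorial : ℕ) : ZMod p) *
              ∏ i ∈ core, (((d i).choose (bh i) : ZMod p) * c i ^ bh i) := by
      refine Finset.sum_bij_ne_zero
        (fun x _ _ => fun j => if j ∈ core then x.2 j else 0) ?_ ?_ ?_ ?_
      · -- membership
        intro x hx hne
        obtain ⟨h1, h2⟩ := hmemx x hne
        obtain ⟨_, _, _, _, _, _, _, hsb⟩ := hstruct x.1 x.2 (Finset.HasAntidiagonal.mem_antidiagonal.mp hx) h1 h2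
        rw [Finset.mem_piAntidiag]
        constructor
        · exact Eq.trans (Finset.sum_congr rfl fun i hi => if_pos hi) hsb
        · intro i hi
          by_contra hic
          exact hi (by simp [hic])
      · -- injectivity
        intro x₁ hx₁ hne₁ x₂ hx₂ hne₂ heq
        obtain ⟨h11, h12⟩ := hmemx x₁ hne₁
        obtain ⟨h21, h22⟩ := hmemx x₂ hne₂
        obtain ⟨_, hbpen1, _, _, hblst1, _, _, _⟩ :=
          hstruct x₁.1 x₁.2 (Finset.HasAntidiagonal.mem_antidiagonal.mp hx₁) h11 h12
        obtain ⟨_, hbpen2, _, _, hblst2, _, _, _⟩ :=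
          hstruct x₂.1 x₂.2 (Finset.HasAntidiagonal.mem_antidiagonal.mp hx₂) h21 h22
        have hbeq : x₁.2 = x₂.2 := by
          apply Finsupp.ext
          intro j
          rcases hcases j with rfl | rfl | hj
          · rw [hbpen1, hbpen2]
          · rw [hblst1, hblst2]
          · have h5 := congrFun heq j
            simpa [hj] using h5
        have haeq : x₁.1 = x₂.1 := by
          have e1 := Finset.HasAntidiagonal.mem_antidiagonal.mp hx₁
          have e2 := Finset.HasAntidiagonal.mem_antidiagonal.mp hx₂
          rw [hbeq] at e1
          rw [← e2] at e1
          exact add_right_cancel e1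
        exact Prod.ext haeq hbeq
      · -- surjectivity
        intro bh hbh hgne
        have hbh' := Finset.mem_piAntidiag.mp hbh
        have hble : ∀ i ∈ core, bh i ≤ d i := by
          intro i hi
          by_contra hlt
          push_neg at hlt
          apply hgne
          rw [Finset.prod_eq_zero hi (by
            rw [Nat.choose_eq_zero_of_lt hlt, Nat.cast_zero, zero_mul]), mul_zero]
        set bfull : Fin (p + 1) →₀ ℕ := Finsupp.equivFunOnFinite.symm
          (fun j => if j = lst then t else if j ∈ core then bh j else 0) with hbfull
        set afull : Fin (p + 1) →₀ ℕ := Finsupp.equivFunOnFinite.symm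
          (fun j => if j = pen then s else if j ∈ core then d j - bh j else 0) with hafull
        have hbfj : ∀ j, bfull j = if j = lst then t else if j ∈ core then bh j else 0 :=
          fun j => rfl
        have hafj : ∀ j, afull j = if j = pen then s else if j ∈ core then d j - bh j else 0 :=
          fun j => rfl
        have habd : afull + bfull = d := by
          apply Finsupp.ext
          intro j
          rw [Finsupp.add_apply, hafj, hbfj]
          rcases hcases j with rfl | rfl | hj
          · rw [if_pos rfl, if_neg hpenlst, if_neg hpen_core]
            omega
          · rw [if_neg (Ne.symm hpenlst), if_neg hlst_core, if_pos rfl]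
            omega
          · have hjp : j ≠ pen := fun h => hpen_core (h ▸ hj)
            have hjl : j ≠ lst := fun h => hlst_core (h ▸ hj)
            rw [if_neg hjp, if_neg hjl, if_pos hj, if_pos hj]
            have := hble j hj
            omega
        have hsbf : ∑ i ∈ core, bfull i = v := by
          rw [← hbh'.1]
          refine Finset.sum_congr rfl fun i hi => ?_
          have hjl : i ≠ lst := fun h => hlst_core (h ▸ hi)
          rw [hbfj, if_neg hjl, if_pos hi]
        have hsaf : ∑ i ∈ core, afull i = u := by
          have e1 : ∑ i ∈ core, afull i = ∑ i ∈ core, (d i - bh i) := by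
            refine Finset.sum_congr rfl fun i hi => ?_
            have hjp : i ≠ pen := fun h => hpen_core (h ▸ hi)
            rw [hafj, if_neg hjp, if_pos hi]
          rw [e1, Finset.sum_tsub_distrib core hble, hbh'.1, hcoresum]
          omega
        have mafull : ⇑afull ∈ Finset.piAntidiag s₁ (p - 1) := by
          rw [Finset.mem_piAntidiag]
          constructor
          · rw [hs₁, Finset.sum_insert hpen_core, hsaf, hafj, if_pos rfl]
            omega
          · intro j hj
            rcases hcases j with rfl | rfl | hjc
            · rw [hs₁]; exact Finset.mem_insert_self _ _
            · rw [hafj, if_neg (Ne.symm hpenlst), if_neg hlst_core] at hj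
              exact absurd rfl hj
            · rw [hs₁]; exact Finset.mem_insert_of_mem hjc
        have mbfull : ⇑bfull ∈ Finset.piAntidiag s₂ (p - 1) := by
          rw [Finset.mem_piAntidiag]
          constructor
          · rw [hs₂def, Finset.sum_insert hlst_core, hsbf, hbfj, if_pos rfl]
            omega
          · intro j hj
            rcases hcases j with rfl | rfl | hjc
            · rw [hbfj, if_neg hpenlst, if_neg hpen_core] at hj
              exact absurd rfl hj
            · rw [hs₂def]; exact Finset.mem_insert_self _ _
            · rw [hs₂def]; exact Finset.mem_insert_of_mem hjc
        have hproj : ∀ j, (if j ∈ core then bfull j else 0) = bh j := by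
          intro j
          by_cases hj : j ∈ core
          · rw [if_pos hj, hbfj, if_neg (show ¬ j = lst from fun h => hlst_core (h ▸ hj)),
              if_pos hj]
          · rw [if_neg hj]
            by_contra hne
            exact hj (hbh'.2 j fun h => hne h.symm)
        have hval : (Unat : ZMod p) *
            (MvPolynomial.coeff afull ((∑ i ∈ s₁, C ((fun _ : Fin (p + 1) => (1 : ZMod p)) i) * X i) ^ (p - 1)) *
             MvPolynomial.coeff bfull ((∑ i ∈ s₂, C (c i) * X i) ^ (p - 1)))
            = (((p - 1).choose s * (p - 1).choose t * u.factorial * v.factorial : ℕ) : ZMod p) *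
              ∏ i ∈ core, (((d i).choose (bh i) : ZMod p) * c i ^ bh i) := by
          rw [hA, if_pos mafull, hB, if_pos mbfull,
            key afull bfull habd mafull mbfull]
          congr 1
          refine Finset.prod_congr rfl fun i hi => ?_
          have hbi : bfull i = bh i := by
            rw [hbfj, if_neg (show ¬ i = lst from fun h => hlst_core (h ▸ hi)), if_pos hi]
          rw [hbi]
        refine ⟨(afull, bfull), Finset.HasAntidiagonal.mem_antidiagonal.mpr habd, ?_, ?_⟩
        · rw [hval]
          exact hgne
        · exact funext hproj
      · -- values
        intro x hx hne
        obtain ⟨h1, h2⟩ := hmemx x hne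
        rw [hA, if_pos h1, hB, if_pos h2, key x.1 x.2 (Finset.HasAntidiagonal.mem_antidiagonal.mp hx) h1 h2]
        congr 1
        refine Finset.prod_congr rfl fun i hi => by simp [hi]
    rw [hbij, ← Finset.mul_sum,
      reduced_vanishing p core c hprod hcard_core ⇑d (fun i _ => hd1 i) u v hcoresum.symm
        (by omega) (by omega), mul_zero]
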